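/- Shifted inverse mechanism, pure DP: Let Y be a finite nonempty set of real numbers, let g be a function from finite multisets over a set X to Y that is monotone (x' ≤ x implies g(x') ≤ g(x)), and let ε, β > 0. Set t = 2·⌈(2/ε)·log(|Y|/β)⌉. Then there exists a randomized algorithm M mapping finite multisets over X to probability distributions on Y such that (i) M is (ε,0)-differentially private, and (ii) for every finite multiset x, with probability at least 1 − β over the randomness of M, g(x) ≥ M(x) ≥ min{ g(x') : x' ≤ x, |x'| ≥ |x| − t }. -/

import Mathlib

open scoped Classical
set_option maxHeartbeats 1000000

section SIaux
variable {X : Type*}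

/-- Largest size of a sub-multiset `z ≤ x` with `p (g z)`. -/
noncomputable def SIsup (g : Multiset X → ℝ) (p : ℝ → Prop) (x : Multiset X) : ℕ :=
  ((Finset.range (Multiset.card x + 1)).filter
    (fun s => ∃ z, z ≤ x ∧ Multiset.card z = s ∧ p (g z))).sup id

lemma SIsup_ge (g : Multiset X → ℝ) (p : ℝ → Prop) {x z : Multiset X}
    (hz : z ≤ x) (hp : p (g z)) : Multiset.card z ≤ SIsup g p x := by
  have hmem : Multiset.card z ∈ (Finset.range (Multiset.card x + 1)).filter
      (fun s => ∃ z', z' ≤ x ∧ Multiset.card z' = s ∧ p (g z')) := by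
    refine Finset.mem_filter.2 ⟨Finset.mem_range.2 ?_, ⟨z, hz, rfl, hp⟩⟩
    exact Nat.lt_succ_of_le (Multiset.card_le_card hz)
  exact Finset.le_sup (f := id) hmem

lemma SIsup_spec (g : Multiset X → ℝ) (p : ℝ → Prop) (x : Multiset X)
    (h0 : p (g 0)) : ∃ z, z ≤ x ∧ Multiset.card z = SIsup g p x ∧ p (g z) := by
  have hne : ((Finset.range (Multiset.card x + 1)).filter
      (fun s => ∃ z, z ≤ x ∧ Multiset.card z = s ∧ p (g z))).Nonempty := by
    refine ⟨0, Finset.mem_filter.2 ⟨Finset.mem_range.2 (Nat.succ_pos _), ⟨0, Multiset.zero_le x, Multiset.card_zero, h0⟩⟩⟩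
  obtain ⟨s, hs, hsup⟩ := Finset.exists_mem_eq_sup _ hne id
  obtain ⟨-, z, hz, hcz, hpz⟩ := Finset.mem_filter.1 hs
  refine ⟨z, hz, ?_, hpz⟩
  rw [SIsup, hsup]; simpa using hcz

lemma SIsup_mono (g : Multiset X → ℝ) (p : ℝ → Prop) {x x' : Multiset X}
    (h : x ≤ x') : SIsup g p x ≤ SIsup g p x' := by
  apply Finset.sup_le
  intro s hs
  obtain ⟨-, z, hz, hcz, hpz⟩ := Finset.mem_filter.1 hs
  simpa [hcz] using SIsup_ge g p (le_trans hz h) hpz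

lemma SIsup_cons_le (g : Multiset X → ℝ)
    (hmono : ∀ x' x : Multiset X, x' ≤ x → g x' ≤ g x)
    (p : ℝ → Prop) (hp : ∀ a b : ℝ, a ≤ b → p b → p a)
    (a : X) (x : Multiset X) : SIsup g p (a ::ₘ x) ≤ SIsup g p x + 1 := by
  classical
  apply Finset.sup_le
  intro s hs
  obtain ⟨-, z, hz, hcz, hpz⟩ := Finset.mem_filter.1 hs
  have hze : z.erase a ≤ x := Multiset.erase_le_iff_le_cons.2 hz
  have hpe : p (g (z.erase a)) := hp _ _ (hmono _ _ (Multiset.erase_le a z)) hpz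
  have hcard : Multiset.card z ≤ Multiset.card (z.erase a) + 1 := by
    by_cases hmem : a ∈ z
    · rw [Multiset.card_erase_of_mem hmem]
      have h1 : 0 < Multiset.card z := Multiset.card_pos_iff_exists_mem.2 ⟨a, hmem⟩
      rw [Nat.pred_eq_sub_one]
      omega
    · rw [Multiset.erase_of_notMem hmem]
      exact Nat.le_succ _
  calc (id s : ℕ) = Multiset.card z := hcz.symm
    _ ≤ Multiset.card (z.erase a) + 1 := hcard
    _ ≤ SIsup g p x + 1 := by
        have := SIsup_ge g p hze hpe; omega

lemma SIsup_le_card (g : Multiset X → ℝ) (p : ℝ → Prop) (x : Multiset X) :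
    SIsup g p x ≤ Multiset.card x := by
  apply Finset.sup_le
  intro s hs
  have := (Finset.mem_filter.1 hs).1
  simpa using Nat.lt_succ_iff.1 (Finset.mem_range.1 this)

/-- The (penalty) utility of the shifted-inverse mechanism. -/
noncomputable def SIu (g : Multiset X → ℝ) (τ : ℤ) (x : Multiset X) (y : ℝ) : ℤ :=
  if g 0 < y then
    max ((Multiset.card x : ℤ) - τ - (SIsup g (fun r => r ≤ y) x : ℤ))
        ((SIsup g (fun r => r < y) x : ℤ) - (Multiset.card x : ℤ) + τ)
  else (Multiset.card x : ℤ) - τ - (SIsup g (fun r => r ≤ y) x : ℤ)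

lemma SIu_cons (g : Multiset X → ℝ)
    (hmono : ∀ x' x : Multiset X, x' ≤ x → g x' ≤ g x)
    (τ : ℤ) (a : X) (x : Multiset X) (y : ℝ) :
    SIu g τ x y - 1 ≤ SIu g τ (a ::ₘ x) y ∧ SIu g τ (a ::ₘ x) y ≤ SIu g τ x y + 1 := by
  have hle : x ≤ a ::ₘ x := Multiset.le_cons_self x a
  have h1 : SIsup g (fun r => r ≤ y) x ≤ SIsup g (fun r => r ≤ y) (a ::ₘ x) :=
    SIsup_mono g _ hle
  have h2 : SIsup g (fun r => r ≤ y) (a ::ₘ x) ≤ SIsup g (fun r => r ≤ y) x + 1 :=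
    SIsup_cons_le g hmono _ (fun a b hab hb => le_trans hab hb) a x
  have h3 : SIsup g (fun r => r < y) x ≤ SIsup g (fun r => r < y) (a ::ₘ x) :=
    SIsup_mono g _ hle
  have h4 : SIsup g (fun r => r < y) (a ::ₘ x) ≤ SIsup g (fun r => r < y) x + 1 :=
    SIsup_cons_le g hmono _ (fun a b hab hb => lt_of_le_of_lt hab hb) a x
  have hc : (Multiset.card (a ::ₘ x) : ℤ) = (Multiset.card x : ℤ) + 1 := by
    rw [Multiset.card_cons]; push_cast; ring
  unfold SIu
  have h1' : (SIsup g (fun r => r ≤ y) x : ℤ) ≤ (SIsup g (fun r => r ≤ y) (a ::ₘ x) : ℤ) := by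
    exact_mod_cast h1
  have h2' : (SIsup g (fun r => r ≤ y) (a ::ₘ x) : ℤ) ≤ (SIsup g (fun r => r ≤ y) x : ℤ) + 1 := by
    exact_mod_cast h2
  have h3' : (SIsup g (fun r => r < y) x : ℤ) ≤ (SIsup g (fun r => r < y) (a ::ₘ x) : ℤ) := by
    exact_mod_cast h3
  have h4' : (SIsup g (fun r => r < y) (a ::ₘ x) : ℤ) ≤ (SIsup g (fun r => r < y) x : ℤ) + 1 := by
    exact_mod_cast h4
  by_cases h0 : g 0 < y
  · rw [if_pos h0, if_pos h0, hc]
    omega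
  · rw [if_neg h0, if_neg h0, hc]
    omega

end SIaux

section SImech
variable {X : Type*}

noncomputable def SIwgt (g : Multiset X → ℝ) (τ : ℤ) (ε : ℝ) (x : Multiset X) (y : ℝ) : ℝ :=
  Real.exp (-(ε/2) * (SIu g τ x y : ℝ))

noncomputable def SIZ (g : Multiset X → ℝ) (τ : ℤ) (ε : ℝ) (Y' : Finset ℝ) (x : Multiset X) : ℝ :=
  ∑ y ∈ Y', SIwgt g τ ε x y

noncomputable def SIf (g : Multiset X → ℝ) (τ : ℤ) (ε : ℝ) (Y' : Finset ℝ) (x : Multiset X)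
    (y : ℝ) : ENNReal :=
  if y ∈ Y' then ENNReal.ofReal (SIwgt g τ ε x y / SIZ g τ ε Y' x) else 0

lemma SIwgt_pos (g : Multiset X → ℝ) (τ : ℤ) (ε : ℝ) (x : Multiset X) (y : ℝ) :
    0 < SIwgt g τ ε x y := Real.exp_pos _

lemma SIZ_pos (g : Multiset X → ℝ) (τ : ℤ) (ε : ℝ) {Y' : Finset ℝ} (hY' : Y'.Nonempty)
    (x : Multiset X) : 0 < SIZ g τ ε Y' x :=
  Finset.sum_pos (fun y _ => SIwgt_pos g τ ε x y) hY'

lemma SIf_sum (g : Multiset X → ℝ) (τ : ℤ) (ε : ℝ) {Y' : Finset ℝ} (hY' : Y'.Nonempty)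
    (x : Multiset X) : ∑ y ∈ Y', SIf g τ ε Y' x y = 1 := by
  have h1 : ∑ y ∈ Y', SIf g τ ε Y' x y
      = ∑ y ∈ Y', ENNReal.ofReal (SIwgt g τ ε x y / SIZ g τ ε Y' x) :=
    Finset.sum_congr rfl (fun y hy => if_pos hy)
  rw [h1, ← ENNReal.ofReal_sum_of_nonneg
    (fun y _ => div_nonneg (le_of_lt (SIwgt_pos g τ ε x y)) (le_of_lt (SIZ_pos g τ ε hY' x))),
    ← Finset.sum_div]
  have hZdef : (∑ i ∈ Y', SIwgt g τ ε x i) = SIZ g τ ε Y' x := rfl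
  rw [hZdef, div_self (ne_of_gt (SIZ_pos g τ ε hY' x))]
  exact ENNReal.ofReal_one

noncomputable def SIM (g : Multiset X → ℝ) (τ : ℤ) (ε : ℝ) (Y' : Finset ℝ) (hY' : Y'.Nonempty)
    (x : Multiset X) : PMF ℝ :=
  PMF.ofFinset (SIf g τ ε Y' x) Y' (SIf_sum g τ ε hY' x) (fun y hy => if_neg hy)

lemma SIM_apply (g : Multiset X → ℝ) (τ : ℤ) (ε : ℝ) (Y' : Finset ℝ) (hY' : Y'.Nonempty)
    (x : Multiset X) (y : ℝ) : SIM g τ ε Y' hY' x y = SIf g τ ε Y' x y := rfl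

lemma SIM_dp (g : Multiset X → ℝ) (τ : ℤ) {ε : ℝ} (hε : 0 < ε) {Y' : Finset ℝ}
    (hY' : Y'.Nonempty) (x x' : Multiset X)
    (hsens : ∀ y, SIu g τ x' y - 1 ≤ SIu g τ x y ∧ SIu g τ x y ≤ SIu g τ x' y + 1)
    (V : Set ℝ) :
    (SIM g τ ε Y' hY' x).toOuterMeasure V
      ≤ ENNReal.ofReal (Real.exp ε) * (SIM g τ ε Y' hY' x').toOuterMeasure V := by
  have hεhalf : (0:ℝ) ≤ ε/2 := by linarith
  have hw : ∀ (u v : Multiset X) (y : ℝ), SIu g τ v y ≤ SIu g τ u y + 1 →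
      SIwgt g τ ε u y ≤ Real.exp (ε/2) * SIwgt g τ ε v y := by
    intro u v y h
    rw [SIwgt, SIwgt, ← Real.exp_add]
    apply Real.exp_le_exp.2
    have h' : (SIu g τ v y : ℝ) ≤ (SIu g τ u y : ℝ) + 1 := by exact_mod_cast h
    nlinarith [mul_nonneg hεhalf (by linarith : (0:ℝ) ≤ (SIu g τ u y : ℝ) + 1 - (SIu g τ v y : ℝ))]
  have hZ : SIZ g τ ε Y' x' ≤ Real.exp (ε/2) * SIZ g τ ε Y' x := by
    rw [SIZ, SIZ, Finset.mul_sum]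
    exact Finset.sum_le_sum (fun y _ => hw x' x y (hsens y).2)
  have hzero : ∀ (u : Multiset X), ∀ y ∉ Y',
      V.indicator (⇑(SIM g τ ε Y' hY' u)) y = 0 := by
    intro u y hy
    have : SIM g τ ε Y' hY' u y = 0 := by rw [SIM_apply, SIf, if_neg hy]
    simp [Set.indicator_apply, this]
  rw [PMF.toOuterMeasure_apply, PMF.toOuterMeasure_apply,
    tsum_eq_sum (hzero x), tsum_eq_sum (hzero x'), Finset.mul_sum]
  apply Finset.sum_le_sum
  intro y hy
  by_cases hyV : y ∈ V
  · rw [Set.indicator_of_mem hyV, Set.indicator_of_mem hyV, SIM_apply, SIM_apply,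
      SIf, SIf, if_pos hy, if_pos hy]
    have hreal : SIwgt g τ ε x y / SIZ g τ ε Y' x
        ≤ Real.exp ε * (SIwgt g τ ε x' y / SIZ g τ ε Y' x') := by
      rw [mul_div_assoc']
      rw [div_le_div_iff₀ (SIZ_pos g τ ε hY' x) (SIZ_pos g τ ε hY' x')]
      calc SIwgt g τ ε x y * SIZ g τ ε Y' x'
          ≤ (Real.exp (ε/2) * SIwgt g τ ε x' y) * (Real.exp (ε/2) * SIZ g τ ε Y' x) := by
            apply mul_le_mul (hw x x' y (by have := (hsens y).1; omega)) hZ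
              (le_of_lt (SIZ_pos g τ ε hY' x')) (mul_nonneg (le_of_lt (Real.exp_pos _)) (le_of_lt (SIwgt_pos g τ ε x' y)))
        _ = Real.exp ε * SIwgt g τ ε x' y * SIZ g τ ε Y' x := by
            rw [show ε = ε/2 + ε/2 by ring, Real.exp_add]; ring
    calc ENNReal.ofReal (SIwgt g τ ε x y / SIZ g τ ε Y' x)
        ≤ ENNReal.ofReal (Real.exp ε * (SIwgt g τ ε x' y / SIZ g τ ε Y' x')) :=
          ENNReal.ofReal_le_ofReal hreal
      _ = ENNReal.ofReal (Real.exp ε)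
            * ENNReal.ofReal (SIwgt g τ ε x' y / SIZ g τ ε Y' x') :=
          ENNReal.ofReal_mul (le_of_lt (Real.exp_pos _))
  · rw [Set.indicator_of_notMem hyV, Set.indicator_of_notMem hyV]
    simp

end SImech
/-- Shifted inverse mechanism, pure DP: for a monotone function `g` taking values in a
finite nonempty set `Y ⊆ ℝ` and `t = 2·⌈(2/ε)·log(|Y|/β)⌉`, there is a randomized
algorithm `M` (a distribution on `Y` for each input multiset) that is
`(ε,0)`-differentially private and, on every input `x`, satisfies
`g(x) ≥ M(x) ≥ min{ g(x') : x' ≤ x, |x'| ≥ |x| − t }` with probability at least `1 − β`. -/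
theorem shifted_inverse_pure_dp {X : Type*} (Y : Finset ℝ) (hY : Y.Nonempty)
    (g : Multiset X → ℝ) (hg : ∀ x, g x ∈ Y)
    (hmono : ∀ x' x : Multiset X, x' ≤ x → g x' ≤ g x)
    (ε β : ℝ) (hε : 0 < ε) (hβ : 0 < β)
    (t : ℤ) (ht : t = 2 * ⌈2 / ε * Real.log ((Y.card : ℝ) / β)⌉) :
    ∃ M : Multiset X → PMF ℝ,
      (∀ x : Multiset X, ∀ y ∈ (M x).support, y ∈ Y) ∧
      (∀ x x' : Multiset X,
        Multiset.card (x - x') + Multiset.card (x' - x) = 1 →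
        ∀ V : Set ℝ,
          (M x).toOuterMeasure V ≤ ENNReal.ofReal (Real.exp ε) * (M x').toOuterMeasure V) ∧
      (∀ x : Multiset X,
        ENNReal.ofReal (1 - β) ≤ (M x).toOuterMeasure
          {y : ℝ | y ≤ g x ∧
            sInf {r : ℝ | ∃ z, z ≤ x ∧
                (Multiset.card x : ℤ) - t ≤ (Multiset.card z : ℤ) ∧ g z = r} ≤ y}) := by
  classical
  set τ : ℤ := ⌈2 / ε * Real.log ((Y.card : ℝ) / β)⌉ with hτdef
  set Y' : Finset ℝ := Y.filter (fun y => g 0 ≤ y) with hY'def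
  have hY'ne : Y'.Nonempty := ⟨g 0, Finset.mem_filter.2 ⟨hg 0, le_refl _⟩⟩
  have hgY' : ∀ x : Multiset X, g x ∈ Y' :=
    fun x => Finset.mem_filter.2 ⟨hg x, hmono 0 x (Multiset.zero_le x)⟩
  refine ⟨SIM g τ ε Y' hY'ne, ?_, ?_, ?_⟩
  · -- support
    intro x y hy
    have hne : SIM g τ ε Y' hY'ne x y ≠ 0 := PMF.mem_support_iff _ y |>.1 hy
    by_contra hyY
    have hyY' : y ∉ Y' := fun h => hyY (Finset.mem_filter.1 h).1
    exact hne (by rw [SIM_apply, SIf, if_neg hyY'])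
  · -- DP
    intro x x' hn V
    rcases Nat.add_eq_one_iff.1 hn with ⟨h1, h2⟩ | ⟨h1, h2⟩
    · -- x ≤ x', x' = a ::ₘ x
      have hle : x ≤ x' := by
        have : x - x' = 0 := Multiset.card_eq_zero.1 h1
        exact tsub_eq_zero_iff_le.1 this
      obtain ⟨a, ha⟩ := Multiset.card_eq_one.1 h2
      have hx' : x' = a ::ₘ x := by
        have hh := tsub_add_cancel_of_le hle
        rw [ha, Multiset.singleton_add] at hh
        exact hh.symm
      apply SIM_dp g τ hε hY'ne x x' ?_ V
      intro y
      rw [hx']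
      have := SIu_cons g hmono τ a x y
      omega
    · -- x' ≤ x, x = a ::ₘ x'
      have hle : x' ≤ x := by
        have : x' - x = 0 := Multiset.card_eq_zero.1 h2
        exact tsub_eq_zero_iff_le.1 this
      obtain ⟨a, ha⟩ := Multiset.card_eq_one.1 h1
      have hx : x = a ::ₘ x' := by
        have hh := tsub_add_cancel_of_le hle
        rw [ha, Multiset.singleton_add] at hh
        exact hh.symm
      apply SIM_dp g τ hε hY'ne x x' ?_ V
      intro y
      rw [hx]
      have := SIu_cons g hmono τ a x' y
      omega
  · -- accuracy
    intro x
    set m : ℝ := sInf {r : ℝ | ∃ z, z ≤ x ∧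
        (Multiset.card x : ℤ) - t ≤ (Multiset.card z : ℤ) ∧ g z = r} with hmdef
    set G : Set ℝ := {y : ℝ | y ≤ g x ∧ m ≤ y} with hGdef
    by_cases hβ1 : 1 ≤ β
    · have : ENNReal.ofReal (1 - β) = 0 := by
        rw [ENNReal.ofReal_eq_zero]; linarith
      rw [this]; exact zero_le
    push_neg at hβ1
    have hk1 : (1:ℝ) ≤ (Y.card : ℝ) := by
      have := Finset.card_pos.2 hY
      exact_mod_cast this
    have hkβ : 1 < (Y.card : ℝ) / β := by
      rw [lt_div_iff₀ hβ]; nlinarith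
    have hτ1 : (1:ℤ) ≤ τ := by
      rw [hτdef]
      have : (0:ℝ) < 2 / ε * Real.log ((Y.card : ℝ) / β) :=
        mul_pos (by positivity) (Real.log_pos hkβ)
      exact Int.ceil_pos.2 this
    -- exp bound
    have hexp : Real.exp (-(ε/2) * (τ:ℝ)) ≤ β / (Y.card : ℝ) := by
      have hτge : 2 / ε * Real.log ((Y.card : ℝ) / β) ≤ (τ:ℝ) := by
        rw [hτdef]; exact Int.le_ceil _
      have hlog : Real.log ((Y.card : ℝ) / β) ≤ (ε/2) * (τ:ℝ) := by
        have h2 := mul_le_mul_of_nonneg_left hτge (by positivity : (0:ℝ) ≤ ε/2)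
        calc Real.log ((Y.card : ℝ) / β)
            = ε/2 * (2 / ε * Real.log ((Y.card : ℝ) / β)) := by field_simp
          _ ≤ ε/2 * (τ:ℝ) := h2
      have hpos : (0:ℝ) < (Y.card : ℝ) / β := div_pos (by linarith) hβ
      calc Real.exp (-(ε/2) * (τ:ℝ)) ≤ Real.exp (-Real.log ((Y.card : ℝ) / β)) := by
            apply Real.exp_le_exp.2; linarith
        _ = Real.exp (Real.log (((Y.card : ℝ) / β)⁻¹)) := by rw [Real.log_inv]
        _ = ((Y.card : ℝ) / β)⁻¹ := Real.exp_log (inv_pos.2 hpos)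
        _ = β / (Y.card : ℝ) := by rw [inv_div]
    -- the bad utility bound
    have hbadu : ∀ y ∈ Y', ¬(y ≤ g x ∧ m ≤ y) → τ ≤ SIu g τ x y := by
      intro y hyY' hbad
      have hy0 : g 0 ≤ y := (Finset.mem_filter.1 hyY').2
      by_cases hygx : y ≤ g x
      · -- then ¬ m ≤ y, i.e. y < m
        have hym : y < m := by
          by_contra h
          exact hbad ⟨hygx, not_lt.1 h⟩
        obtain ⟨z, hz, hcz, hgz⟩ := SIsup_spec g (fun r => r ≤ y) x hy0
        have hT : (SIsup g (fun r => r ≤ y) x : ℤ) < (Multiset.card x : ℤ) - t := by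
          by_contra h
          push_neg at h
          have hmem : g z ∈ {r : ℝ | ∃ z', z' ≤ x ∧
              (Multiset.card x : ℤ) - t ≤ (Multiset.card z' : ℤ) ∧ g z' = r} :=
            ⟨z, hz, by rw [hcz]; exact_mod_cast h, rfl⟩
          have hbdd : BddBelow {r : ℝ | ∃ z', z' ≤ x ∧
              (Multiset.card x : ℤ) - t ≤ (Multiset.card z' : ℤ) ∧ g z' = r} := by
            apply BddBelow.mono ?_ Y.finite_toSet.bddBelow
            rintro r ⟨z', -, -, rfl⟩
            exact hg z'
          have : m ≤ g z := csInf_le hbdd hmem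
          linarith
        have hA : τ ≤ (Multiset.card x : ℤ) - τ - (SIsup g (fun r => r ≤ y) x : ℤ) := by
          omega
        rw [SIu]
        split_ifs with h0
        · exact le_trans hA (le_max_left _ _)
        · exact hA
      · -- y > g x
        push_neg at hygx
        have h0 : g 0 < y := lt_of_le_of_lt (hmono 0 x (Multiset.zero_le x)) hygx
        rw [SIu, if_pos h0]
        refine le_trans ?_ (le_max_right _ _)
        have hS : Multiset.card x ≤ SIsup g (fun r => r < y) x :=
          SIsup_ge g _ (le_refl x) hygx
        have hS' : (Multiset.card x : ℤ) ≤ (SIsup g (fun r => r < y) x : ℤ) := by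
          exact_mod_cast hS
        omega
    -- the good candidate
    have hstar : ∃ y ∈ Y', SIu g τ x y ≤ 0 := by
      set Ygood : Finset ℝ := Y'.filter
        (fun y => (Multiset.card x : ℤ) - τ ≤ (SIsup g (fun r => r ≤ y) x : ℤ)) with hYg
      have hgxYg : g x ∈ Ygood := by
        refine Finset.mem_filter.2 ⟨hgY' x, ?_⟩
        have : Multiset.card x ≤ SIsup g (fun r => r ≤ g x) x :=
          SIsup_ge g _ (le_refl x) (le_refl _)
        have h' : (Multiset.card x : ℤ) ≤ (SIsup g (fun r => r ≤ g x) x : ℤ) := by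
          exact_mod_cast this
        omega
      have hYgne : Ygood.Nonempty := ⟨g x, hgxYg⟩
      set ystar : ℝ := Ygood.min' hYgne with hys
      have hysYg : ystar ∈ Ygood := Ygood.min'_mem hYgne
      have hysY' : ystar ∈ Y' := (Finset.mem_filter.1 hysYg).1
      have hA : (Multiset.card x : ℤ) - τ - (SIsup g (fun r => r ≤ ystar) x : ℤ) ≤ 0 := by
        have := (Finset.mem_filter.1 hysYg).2
        omega
      refine ⟨ystar, hysY', ?_⟩
      rw [SIu]
      split_ifs with h0
      · apply max_le hA
        by_contra hB
        push_neg at hB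
        obtain ⟨z, hz, hcz, hgz⟩ := SIsup_spec g (fun r => r < ystar) x h0
        have hzY' : g z ∈ Y' := hgY' z
        have hTz : (Multiset.card x : ℤ) - τ ≤ (SIsup g (fun r => r ≤ g z) x : ℤ) := by
          have h1 : Multiset.card z ≤ SIsup g (fun r => r ≤ g z) x :=
            SIsup_ge g _ hz (le_refl _)
          have h1' : (Multiset.card z : ℤ) ≤ (SIsup g (fun r => r ≤ g z) x : ℤ) := by
            exact_mod_cast h1
          have h2' : (Multiset.card z : ℤ) = (SIsup g (fun r => r < ystar) x : ℤ) := by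
            exact_mod_cast hcz
          omega
        have hzYg : g z ∈ Ygood := Finset.mem_filter.2 ⟨hzY', hTz⟩
        have := Ygood.min'_le _ hzYg
        rw [← hys] at this
        linarith
      · exact hA
    obtain ⟨ystar, hysY', hysu⟩ := hstar
    -- Z ≥ 1
    have hZ1 : (1:ℝ) ≤ SIZ g τ ε Y' x := by
      have hw1 : (1:ℝ) ≤ SIwgt g τ ε x ystar := by
        rw [SIwgt]
        apply Real.one_le_exp
        have : (SIu g τ x ystar : ℝ) ≤ 0 := by exact_mod_cast hysu
        nlinarith
      calc (1:ℝ) ≤ SIwgt g τ ε x ystar := hw1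
        _ ≤ SIZ g τ ε Y' x :=
          Finset.single_le_sum (fun y _ => le_of_lt (SIwgt_pos g τ ε x y)) hysY'
    -- bad mass bound
    set Gf : Finset ℝ := Y'.filter (fun y => y ≤ g x ∧ m ≤ y) with hGf
    set Bf : Finset ℝ := Y'.filter (fun y => ¬(y ≤ g x ∧ m ≤ y)) with hBf
    have hbadsum : ∑ y ∈ Bf, SIwgt g τ ε x y / SIZ g τ ε Y' x ≤ β := by
      have hterm : ∀ y ∈ Bf, SIwgt g τ ε x y / SIZ g τ ε Y' x ≤ β / (Y.card : ℝ) := by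
        intro y hy
        obtain ⟨hyY', hbad⟩ := Finset.mem_filter.1 hy
        have hu : τ ≤ SIu g τ x y := hbadu y hyY' hbad
        have hu' : (τ:ℝ) ≤ (SIu g τ x y : ℝ) := by exact_mod_cast hu
        have hwle : SIwgt g τ ε x y ≤ Real.exp (-(ε/2) * (τ:ℝ)) := by
          rw [SIwgt]
          apply Real.exp_le_exp.2
          have hmul := mul_le_mul_of_nonneg_left hu' (by positivity : (0:ℝ) ≤ ε/2)
          linarith
        calc SIwgt g τ ε x y / SIZ g τ ε Y' x ≤ SIwgt g τ ε x y :=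
              div_le_self (le_of_lt (SIwgt_pos g τ ε x y)) hZ1
          _ ≤ Real.exp (-(ε/2) * (τ:ℝ)) := hwle
          _ ≤ β / (Y.card : ℝ) := hexp
      have hcardle : (Bf.card : ℝ) ≤ (Y.card : ℝ) := by
        have h1 : Bf ⊆ Y' := Finset.filter_subset _ _
        have h2 : Y' ⊆ Y := Finset.filter_subset _ _
        exact_mod_cast Finset.card_le_card (Finset.Subset.trans h1 h2)
      have hkpos : (0:ℝ) < (Y.card : ℝ) := by linarith
      calc ∑ y ∈ Bf, SIwgt g τ ε x y / SIZ g τ ε Y' x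
          ≤ ∑ _y ∈ Bf, β / (Y.card : ℝ) := Finset.sum_le_sum hterm
        _ = (Bf.card : ℝ) * (β / (Y.card : ℝ)) := by
            rw [Finset.sum_const, nsmul_eq_mul]
        _ ≤ (Y.card : ℝ) * (β / (Y.card : ℝ)) :=
            mul_le_mul_of_nonneg_right hcardle (le_of_lt (div_pos hβ hkpos))
        _ = β := by rw [mul_comm]; exact div_mul_cancel₀ β (ne_of_gt hkpos)
    have hsumall : ∑ y ∈ Y', SIwgt g τ ε x y / SIZ g τ ε Y' x = 1 := by
      rw [← Finset.sum_div]
      have hZdef : (∑ i ∈ Y', SIwgt g τ ε x i) = SIZ g τ ε Y' x := rfl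
      rw [hZdef, div_self (ne_of_gt (SIZ_pos g τ ε hY'ne x))]
    have hgoodsum : 1 - β ≤ ∑ y ∈ Gf, SIwgt g τ ε x y / SIZ g τ ε Y' x := by
      have := Finset.sum_filter_add_sum_filter_not Y'
        (fun y => y ≤ g x ∧ m ≤ y) (fun y => SIwgt g τ ε x y / SIZ g τ ε Y' x)
      rw [← hGf, ← hBf] at this
      linarith [hbadsum, hsumall, this]
    calc ENNReal.ofReal (1 - β)
        ≤ ENNReal.ofReal (∑ y ∈ Gf, SIwgt g τ ε x y / SIZ g τ ε Y' x) :=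
          ENNReal.ofReal_le_ofReal hgoodsum
      _ = ∑ y ∈ Gf, ENNReal.ofReal (SIwgt g τ ε x y / SIZ g τ ε Y' x) :=
          ENNReal.ofReal_sum_of_nonneg (fun y _ =>
            div_nonneg (le_of_lt (SIwgt_pos g τ ε x y)) (le_of_lt (SIZ_pos g τ ε hY'ne x)))
      _ = ∑ y ∈ Gf, G.indicator (⇑(SIM g τ ε Y' hY'ne x)) y := by
          apply Finset.sum_congr rfl
          intro y hy
          obtain ⟨hyY', hgood⟩ := Finset.mem_filter.1 hy
          have hyG : y ∈ G := hgood
          rw [Set.indicator_of_mem hyG, SIM_apply, SIf, if_pos hyY']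
      _ ≤ ∑' y : ℝ, G.indicator (⇑(SIM g τ ε Y' hY'ne x)) y := ENNReal.sum_le_tsum Gf
      _ = (SIM g τ ε Y' hY'ne x).toOuterMeasure G :=
          (PMF.toOuterMeasure_apply _ _).symm
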